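/- The star chromatic index of the complete graph K_n satisfies χ'_st(K_n) ≥ 3n(n−1)/(n+4) for all n ≥ 1. -/

import Mathlib

open SimpleGraph

/-- A star edge-coloring with `k` colors: a proper edge-coloring (adjacent edges get distinct
colors) such that no path with four edges and no cycle with four edges is bichromatic. -/
def IsStarEdgeColoring {V : Type*} (G : SimpleGraph V) {k : ℕ} (C : Sym2 V → Fin k) : Prop :=
  (∀ e₁ ∈ G.edgeSet, ∀ e₂ ∈ G.edgeSet, e₁ ≠ e₂ → (∃ v, v ∈ e₁ ∧ v ∈ e₂) → C e₁ ≠ C e₂) ∧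
  (∀ (u v : V) (w : G.Walk u v), w.length = 4 → w.IsPath →
    ¬ ∃ a b : Fin k, ∀ e ∈ w.edges, C e = a ∨ C e = b) ∧
  (∀ (u : V) (w : G.Walk u u), w.length = 4 → w.IsCycle →
    ¬ ∃ a b : Fin k, ∀ e ∈ w.edges, C e = a ∨ C e = b)

/-- The star chromatic index: the least `k` admitting a star edge-coloring with `k` colors. -/
noncomputable def starChromaticIndex {V : Type*} (G : SimpleGraph V) : ℕ :=
  sInf {k | ∃ C : Sym2 V → Fin k, IsStarEdgeColoring G C}

namespace StarLB

open Finset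

variable {n k : ℕ} {C : Sym2 (Fin n) → Fin k}

lemma proper (hC : IsStarEdgeColoring (completeGraph (Fin n)) C)
    {a b c : Fin n} (hab : a ≠ b) (hbc : b ≠ c) (hac : a ≠ c) :
    C s(a,b) ≠ C s(b,c) := by
  refine hC.1 s(a,b) hab s(b,c) hbc ?_ ⟨b, by simp, by simp⟩
  rw [Ne, Sym2.eq_iff]
  push_neg
  exact ⟨fun h => absurd h hab, fun h => absurd h hac⟩

lemma partner_unique (hC : IsStarEdgeColoring (completeGraph (Fin n)) C)
    {a b c : Fin n} (hab : a ≠ b) (hac : a ≠ c)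
    (h : C s(a,b) = C s(a,c)) : b = c := by
  by_contra hbc
  have h1 : s(b,a) = s(a,b) := Sym2.eq_swap
  exact proper hC (Ne.symm hab) hac hbc (h1 ▸ h)

/-- two distinct edges of the same color are vertex-disjoint -/
lemma disj (hC : IsStarEdgeColoring (completeGraph (Fin n)) C)
    {a b c d : Fin n} (hab : a ≠ b) (hcd : c ≠ d) (hne : s(a,b) ≠ s(c,d))
    (h : C s(a,b) = C s(c,d)) : a ≠ c ∧ a ≠ d ∧ b ≠ c ∧ b ≠ d := by
  refine ⟨?_, ?_, ?_, ?_⟩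
  · rintro rfl
    exact hne (by rw [partner_unique hC hab hcd h])
  · rintro rfl
    have : b = c := partner_unique hC hab (Ne.symm hcd) (by rwa [Sym2.eq_swap (a := c)] at h)
    exact hne (by rw [this, Sym2.eq_swap])
  · rintro rfl
    have : a = d := partner_unique hC (Ne.symm hab) hcd
      (by rwa [Sym2.eq_swap (a := a)] at h)
    exact hne (by rw [this, Sym2.eq_swap])
  · rintro rfl
    have : a = c := partner_unique hC (Ne.symm hab) (Ne.symm hcd)
      (by rw [Sym2.eq_swap (a := a), Sym2.eq_swap (a := c)] at h; exact h)
    exact hne (by rw [this])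

lemma no_path (hC : IsStarEdgeColoring (completeGraph (Fin n)) C)
    {v0 v1 v2 v3 v4 : Fin n} (h01 : v0 ≠ v1)
    (h02 : v0 ≠ v2) (h03 : v0 ≠ v3) (h04 : v0 ≠ v4)
    (h12 : v1 ≠ v2) (h13 : v1 ≠ v3) (h14 : v1 ≠ v4) (h23 : v2 ≠ v3) (h24 : v2 ≠ v4)
    (h34 : v3 ≠ v4) {a b : Fin k}
    (c1 : C s(v0,v1) = a ∨ C s(v0,v1) = b) (c2 : C s(v1,v2) = a ∨ C s(v1,v2) = b)
    (c3 : C s(v2,v3) = a ∨ C s(v2,v3) = b) (c4 : C s(v3,v4) = a ∨ C s(v3,v4) = b) :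
    False := by
  let w : (completeGraph (Fin n)).Walk v0 v4 :=
    .cons h01 (.cons h12 (.cons h23 (.cons h34 .nil)))
  refine hC.2.1 v0 v4 w rfl ?_ ⟨a, b, ?_⟩
  · rw [SimpleGraph.Walk.isPath_def]
    simp [w, h01, h02, h03, h04, h12, h13, h14, h23, h24, h34]
  · have he : w.edges = [s(v0,v1), s(v1,v2), s(v2,v3), s(v3,v4)] := rfl
    rw [he]
    intro e hee
    simp only [List.mem_cons, List.not_mem_nil, or_false] at hee
    rcases hee with rfl | rfl | rfl | rfl <;> assumption

lemma no_cycle (hC : IsStarEdgeColoring (completeGraph (Fin n)) C)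
    {v0 v1 v2 v3 : Fin n} (h01 : v0 ≠ v1)
    (h02 : v0 ≠ v2) (h03 : v0 ≠ v3)
    (h12 : v1 ≠ v2) (h13 : v1 ≠ v3) (h23 : v2 ≠ v3) {a b : Fin k}
    (c1 : C s(v0,v1) = a ∨ C s(v0,v1) = b) (c2 : C s(v1,v2) = a ∨ C s(v1,v2) = b)
    (c3 : C s(v2,v3) = a ∨ C s(v2,v3) = b) (c4 : C s(v3,v0) = a ∨ C s(v3,v0) = b) :
    False := by
  let w : (completeGraph (Fin n)).Walk v0 v0 :=
    .cons h01 (.cons h12 (.cons h23 (.cons h03.symm .nil)))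
  refine hC.2.2 v0 w rfl ?_ ⟨a, b, ?_⟩
  · rw [SimpleGraph.Walk.isCycle_def]
    refine ⟨?_, by simp [w], ?_⟩
    · rw [SimpleGraph.Walk.isTrail_def]
      simp [w, Sym2.eq_iff, h01, h02, h03, h12, h13, h23, Ne.symm]
    · simp [w, h12, h13, h23]
      exact ⟨h01.symm, h02.symm, h03.symm⟩
  · have he : w.edges = [s(v0,v1), s(v1,v2), s(v2,v3), s(v3,v0)] := rfl
    rw [he]
    intro e hee
    simp only [List.mem_cons, List.not_mem_nil, or_false] at hee
    rcases hee with rfl | rfl | rfl | rfl <;> assumption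


/-- the key freeness fact: for a bichromatic 3-path `w-z-y-x`, the end `x`
has no edge colored like the middle edge `s(z,y)`. -/
lemma free (hC : IsStarEdgeColoring (completeGraph (Fin n)) C)
    {w z y x t : Fin n}
    (hwz : w ≠ z) (hyx : y ≠ x) (hwy : w ≠ y) (hwx : w ≠ x) (hzy : z ≠ y) (hzx : z ≠ x)
    (hcol : C s(w,z) = C s(y,x)) (ht : t ≠ x) (hfree : C s(x,t) = C s(z,y)) : False := by
  have hchi : C s(w,z) ≠ C s(z,y) := proper hC hwz hzy hwy
  rcases eq_or_ne t y with rfl | hty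
  · rw [show s(x,t) = s(t,x) from Sym2.eq_swap] at hfree
    exact hchi (hcol.trans hfree)
  rcases eq_or_ne t z with rfl | htz
  · exact proper hC (Ne.symm hzx) hzy (Ne.symm hyx) hfree
  rcases eq_or_ne t w with rfl | htw
  · exact no_cycle hC hwz hwy hwx hzy hzx hyx
      (Or.inl rfl) (Or.inr rfl) (Or.inl hcol.symm) (Or.inr hfree)
  · exact no_path hC hwz hwy hwx (Ne.symm htw) hzy hzx (Ne.symm htz) hyx
      (Ne.symm hty) (Ne.symm ht)
      (Or.inl rfl) (Or.inr rfl) (Or.inl hcol.symm) (Or.inr hfree)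

/-- the two ends of a same-colored edge pair cannot "swap-collide". -/
lemma noswap (hC : IsStarEdgeColoring (completeGraph (Fin n)) C)
    {w z y x w' : Fin n}
    (hwz : w ≠ z) (hyx : y ≠ x) (hwy : w ≠ y) (hwx : w ≠ x) (hzy : z ≠ y) (hzx : z ≠ x)
    (hw'y : w' ≠ y) (hw'z : w' ≠ z) (hw'x : w' ≠ x)
    (h1 : C s(w,z) = C s(y,x)) (h2 : C s(w',y) = C s(z,x)) : False := by
  rcases eq_or_ne w' w with rfl | hww
  · -- 4-cycle x-y-w'-z-x
    exact no_cycle hC (Ne.symm hyx) (Ne.symm hw'x) (Ne.symm hzx) (Ne.symm hw'y)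
      (Ne.symm hzy) hw'z
      (Or.inl (by rw [show s(x,y) = s(y,x) from Sym2.eq_swap]))
      (Or.inr (by rw [show s(y,w') = s(w',y) from Sym2.eq_swap, h2]))
      (Or.inl h1)
      (Or.inr rfl)
  · -- 4-path w-z-x-y-w'
    exact no_path hC hwz hwx hwy (Ne.symm hww) hzx hzy (Ne.symm hw'z) (Ne.symm hyx)
      (Ne.symm hw'x) (Ne.symm hw'y)
      (Or.inl h1) (Or.inr rfl)
      (Or.inl (by rw [show s(x,y) = s(y,x) from Sym2.eq_swap]))
      (Or.inr (by rw [show s(y,w') = s(w',y) from Sym2.eq_swap, h2]))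

def P (n : ℕ) : Finset (Fin n × Fin n) := univ.filter fun p => p.1 ≠ p.2

def cc (C : Sym2 (Fin n) → Fin k) (p : Fin n × Fin n) : Fin k := C s(p.1, p.2)

def Pd (C : Sym2 (Fin n) → Fin k) (d : Fin k) : Finset (Fin n × Fin n) :=
  (P n).filter fun p => cc C p = d

def M (C : Sym2 (Fin n) → Fin k) (d : Fin k) : ℕ := (Pd C d).card

def FreeS (C : Sym2 (Fin n) → Fin k) (d : Fin k) : Finset (Fin n) :=
  univ.filter fun x => ∀ t, t ≠ x → C s(x,t) ≠ d

def QQ (C : Sym2 (Fin n) → Fin k) : Finset ((Fin n × Fin n) × (Fin n × Fin n)) :=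
  (P n ×ˢ P n).filter fun pq => cc C pq.1 = cc C pq.2 ∧ pq.2 ≠ pq.1 ∧ pq.2 ≠ pq.1.swap

def RR (C : Sym2 (Fin n) → Fin k) : Finset (Fin n × (Fin n × Fin n)) :=
  ((univ : Finset (Fin n)) ×ˢ P n).filter fun xp => ∀ t, t ≠ xp.1 → C s(xp.1,t) ≠ cc C xp.2

variable {C : Sym2 (Fin n) → Fin k}

lemma cc_swap (C : Sym2 (Fin n) → Fin k) (p : Fin n × Fin n) : cc C p.swap = cc C p := by
  unfold cc
  rw [show s(p.swap.1, p.swap.2) = s(p.1, p.2) from Sym2.eq_swap]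

lemma swap_mem_Pd {d : Fin k} {p : Fin n × Fin n} (hp : p ∈ Pd C d) : p.swap ∈ Pd C d := by
  simp only [Pd, P, mem_filter, mem_univ, true_and] at hp ⊢
  exact ⟨Ne.symm hp.1, by rw [cc_swap]; exact hp.2⟩

lemma card_P : (P n).card = n * (n - 1) := by
  have h1 : (univ.filter fun p : Fin n × Fin n => p.1 = p.2).card
      + (univ.filter fun p : Fin n × Fin n => ¬ p.1 = p.2).card
      = (univ : Finset (Fin n × Fin n)).card :=
    card_filter_add_card_filter_not _
  have h2 : (univ.filter fun p : Fin n × Fin n => p.1 = p.2)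
      = univ.image (fun a : Fin n => (a, a)) := by
    ext ⟨a, b⟩
    simp only [mem_filter, mem_univ, true_and, mem_image]
    constructor
    · rintro rfl; exact ⟨a, rfl⟩
    · rintro ⟨c, h⟩
      exact ((Prod.ext_iff.mp h).1.symm.trans (Prod.ext_iff.mp h).2)
  have h3 : (univ.image (fun a : Fin n => (a, a))).card = n := by
    rw [Finset.card_image_of_injective _ (fun a b h => (Prod.ext_iff.mp h).1)]
    simp
  have h4 : (univ : Finset (Fin n × Fin n)).card = n * n := by simp
  have h5 : (P n) = univ.filter fun p : Fin n × Fin n => ¬ p.1 = p.2 := rfl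
  rw [h5]
  rw [h2, h3, h4] at h1
  cases n with
  | zero => omega
  | succ m => simp only [Nat.succ_sub_one]; nlinarith [h1]

lemma sum_M (C : Sym2 (Fin n) → Fin k) : ∑ d : Fin k, M C d = n * (n - 1) := by
  rw [← card_P (n := n)]
  exact (card_eq_sum_card_fiberwise (f := cc C) (fun p _ => mem_univ _)).symm

lemma card_Qd (d : Fin k) :
    ((QQ C).filter fun pq => cc C pq.1 = d).card + 2 * M C d = M C d * M C d := by
  have hQd : ((QQ C).filter fun pq => cc C pq.1 = d)
      = (Pd C d ×ˢ Pd C d).filter fun pq => pq.2 ≠ pq.1 ∧ pq.2 ≠ pq.1.swap := by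
    ext pq
    simp only [QQ, Pd, mem_filter, mem_product]
    constructor
    · rintro ⟨⟨⟨hp1, hp2⟩, hcc, hne⟩, hd⟩
      exact ⟨⟨⟨hp1, hd⟩, hp2, hcc.symm.trans hd⟩, hne⟩
    · rintro ⟨⟨⟨hp1, hd1⟩, hp2, hd2⟩, hne⟩
      exact ⟨⟨⟨hp1, hp2⟩, hd1.trans hd2.symm, hne⟩, hd1⟩
  have hbad : ((Pd C d ×ˢ Pd C d).filter fun pq =>
      ¬(pq.2 ≠ pq.1 ∧ pq.2 ≠ pq.1.swap)).card = 2 * M C d := by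
    have he : ((Pd C d ×ˢ Pd C d).filter fun pq => ¬(pq.2 ≠ pq.1 ∧ pq.2 ≠ pq.1.swap))
        = (Pd C d).image (fun p => (p, p)) ∪ (Pd C d).image (fun p => (p, p.swap)) := by
      ext pq
      simp only [mem_filter, mem_product, mem_union, mem_image, not_and_or, not_ne_iff]
      constructor
      · rintro ⟨⟨h1, h2⟩, (h | h)⟩
        · exact Or.inl ⟨pq.1, h1, Prod.ext_iff.mpr ⟨rfl, h.symm⟩⟩
        · exact Or.inr ⟨pq.1, h1, Prod.ext_iff.mpr ⟨rfl, h.symm⟩⟩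
      · rintro (⟨p, hp, rfl⟩ | ⟨p, hp, rfl⟩)
        · exact ⟨⟨hp, hp⟩, Or.inl rfl⟩
        · exact ⟨⟨hp, swap_mem_Pd hp⟩, Or.inr rfl⟩
    have hdisj : Disjoint ((Pd C d).image (fun p => (p, p)))
        ((Pd C d).image (fun p => (p, p.swap))) := by
      rw [Finset.disjoint_left]
      rintro x hx hy
      simp only [mem_image] at hx hy
      obtain ⟨p, hp, rfl⟩ := hx
      obtain ⟨q, hq, hqe⟩ := hy
      obtain ⟨rfl, h2⟩ := Prod.ext_iff.mp hqe
      have hne : q.1 ≠ q.2 := by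
        simp only [Pd, P, mem_filter, mem_univ, true_and] at hq; exact hq.1
      exact hne ((Prod.ext_iff.mp h2).1.symm)
    rw [he, Finset.card_union_of_disjoint hdisj,
      Finset.card_image_of_injective _ (fun a b h => (Prod.ext_iff.mp h).1),
      Finset.card_image_of_injective _ (fun a b h => (Prod.ext_iff.mp h).1)]
    exact (two_mul _).symm
  have hsplit := card_filter_add_card_filter_not
    (s := Pd C d ×ˢ Pd C d) (p := fun pq => pq.2 ≠ pq.1 ∧ pq.2 ≠ pq.1.swap)
  have hcp : (Pd C d ×ˢ Pd C d).card = M C d * M C d := by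
    rw [Finset.card_product]; rfl
  rw [hbad, hcp] at hsplit
  rw [hQd]
  exact hsplit


lemma card_Rd (hpu : ∀ {a b c : Fin n}, a ≠ b → a ≠ c →
      C s(a,b) = C s(a,c) → b = c) (d : Fin k) :
    ((RR C).filter fun xp => cc C xp.2 = d).card + M C d * M C d = n * M C d := by
  have hRd : ((RR C).filter fun xp => cc C xp.2 = d) = FreeS C d ×ˢ Pd C d := by
    ext xp
    simp only [RR, FreeS, Pd, mem_filter, mem_product, mem_univ, true_and]
    constructor
    · rintro ⟨⟨hp, hfree⟩, hd⟩
      exact ⟨fun t ht => hd ▸ hfree t ht, hp, hd⟩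
    · rintro ⟨hfree, hp, hd⟩
      exact ⟨⟨hp, fun t ht => hd.symm ▸ hfree t ht⟩, hd⟩
  have hcov : (univ.filter fun x : Fin n => ¬ ∀ t, t ≠ x → C s(x,t) ≠ d).card = M C d := by
    have hex : ∀ x ∈ (univ.filter fun x : Fin n => ¬ ∀ t, t ≠ x → C s(x,t) ≠ d),
        ∃ t, t ≠ x ∧ C s(x,t) = d := by
      intro x hx
      simp only [mem_filter, mem_univ, true_and] at hx
      push_neg at hx
      exact hx
    refine Finset.card_bij' (fun x hx => (x, Classical.choose (hex x hx)))
      (fun p hp => p.1) ?_ ?_ ?_ ?_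
    · intro x hx
      obtain ⟨h1, h2⟩ := Classical.choose_spec (hex x hx)
      simp only [Pd, P, mem_filter, mem_univ, true_and]
      exact ⟨Ne.symm h1, h2⟩
    · intro p hp
      simp only [Pd, P, mem_filter, mem_univ, true_and] at hp
      simp only [mem_filter, mem_univ, true_and]
      push_neg
      exact ⟨p.2, Ne.symm hp.1, hp.2⟩
    · intro x hx; rfl
    · intro p hp
      simp only [Pd, P, mem_filter, mem_univ, true_and] at hp
      have hx : p.1 ∈ (univ.filter fun x : Fin n => ¬ ∀ t, t ≠ x → C s(x,t) ≠ d) := by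
        simp only [mem_filter, mem_univ, true_and]
        push_neg
        exact ⟨p.2, Ne.symm hp.1, hp.2⟩
      obtain ⟨h1, h2⟩ := Classical.choose_spec (hex p.1 hx)
      have : Classical.choose (hex p.1 hx) = p.2 :=
        hpu (Ne.symm h1) hp.1 (h2.trans hp.2.symm)
      exact Prod.ext_iff.mpr ⟨rfl, this⟩
  have hfreecard : (FreeS C d).card + M C d = n := by
    have := card_filter_add_card_filter_not
      (s := (univ : Finset (Fin n))) (p := fun x => ∀ t, t ≠ x → C s(x,t) ≠ d)
    rw [hcov] at this
    simpa [FreeS] using this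
  rw [hRd, Finset.card_product]
  show (FreeS C d).card * M C d + M C d * M C d = n * M C d
  nlinarith [hfreecard]


lemma sym2_ne {p q : Fin n × Fin n} (h1 : q ≠ p) (h2 : q ≠ p.swap) :
    s(p.1, p.2) ≠ s(q.1, q.2) := by
  rw [Ne, Sym2.eq_iff]
  rintro (⟨ha, hb⟩ | ⟨ha, hb⟩)
  · exact h1 (Prod.ext_iff.mpr ⟨ha.symm, hb.symm⟩)
  · exact h2 (Prod.ext_iff.mpr ⟨hb.symm, ha.symm⟩)

lemma QQ_props (hC : IsStarEdgeColoring (completeGraph (Fin n)) C)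
    {w z y x : Fin n} (h : ((w,z),(y,x)) ∈ QQ C) :
    w ≠ z ∧ y ≠ x ∧ C s(w,z) = C s(y,x) ∧ w ≠ y ∧ w ≠ x ∧ z ≠ y ∧ z ≠ x := by
  rw [QQ, Finset.mem_filter, Finset.mem_product] at h
  simp only [P, cc, mem_filter, mem_univ, true_and] at h
  obtain ⟨⟨hp1, hp2⟩, hcc, hne1, hne2⟩ := h
  have hs : s(w,z) ≠ s(y,x) :=
    sym2_ne (p := (w,z)) (q := (y,x)) hne1 hne2
  have hd := disj hC hp1 hp2 hs hcc
  exact ⟨hp1, hp2, hcc, hd.1, hd.2.1, hd.2.2.1, hd.2.2.2⟩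

lemma inj_bound (hC : IsStarEdgeColoring (completeGraph (Fin n)) C) :
    2 * (QQ C).card ≤ (RR C).card := by
  have h2 : 2 * (QQ C).card = (QQ C ×ˢ (univ : Finset Bool)).card := by
    rw [Finset.card_product]
    simp [mul_comm]
  rw [h2]
  refine Finset.card_le_card_of_injOn
    (fun qb => (qb.1.2.2, if qb.2 then (qb.1.2.1, qb.1.1.2) else (qb.1.1.2, qb.1.2.1)))
    ?_ ?_
  · rintro ⟨⟨⟨w, z⟩, y, x⟩, b⟩ hqb
    simp only [mem_coe, mem_product, mem_univ, and_true] at hqb ⊢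
    obtain ⟨hwz, hyx, hcc, hwy, hwx, hzy, hzx⟩ := QQ_props hC hqb
    have hfree1 : ∀ t, t ≠ x → C s(x,t) ≠ C s(z,y) := by
      intro t ht hcon
      exact free hC hwz hyx hwy hwx hzy hzx hcc ht hcon
    cases b
    · rw [RR, Finset.mem_filter, Finset.mem_product]
      simp only [RR, P, cc, mem_filter, mem_product, mem_univ, true_and, if_neg Bool.false_ne_true]
      exact ⟨hzy, hfree1⟩
    · rw [RR, Finset.mem_filter, Finset.mem_product]
      simp only [RR, P, cc, mem_filter, mem_product, mem_univ, true_and, if_pos rfl]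
      refine ⟨Ne.symm hzy, fun t ht hcon => hfree1 t ht ?_⟩
      rwa [show s(z,y) = s(y,z) from Sym2.eq_swap]
  · rintro ⟨⟨⟨w1, z1⟩, y1, x1⟩, b1⟩ h1 ⟨⟨⟨w2, z2⟩, y2, x2⟩, b2⟩ h2 heq
    simp only [Finset.coe_product, Set.mem_prod, mem_coe, Finset.coe_univ, Set.mem_univ,
      and_true] at h1 h2
    obtain ⟨hwz1, hyx1, hcc1, hwy1, hwx1, hzy1, hzx1⟩ := QQ_props hC h1
    obtain ⟨hwz2, hyx2, hcc2, hwy2, hwx2, hzy2, hzx2⟩ := QQ_props hC h2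
    cases b1 <;> cases b2 <;>
      simp only [Bool.false_eq_true, if_false, if_true, Prod.mk.injEq] at heq
    · -- false, false : (x1,(z1,y1)) = (x2,(z2,y2))
      obtain ⟨hx, hz, hy⟩ := heq
      subst hx; subst hz; subst hy
      have hw : w1 = w2 := by
        have hcol : C s(z1, w1) = C s(z1, w2) := by
          rw [show s(z1,w1) = s(w1,z1) from Sym2.eq_swap,
            show s(z1,w2) = s(w2,z1) from Sym2.eq_swap]
          exact hcc1.trans hcc2.symm
        exact partner_unique hC (Ne.symm hwz1) (Ne.symm hwz2) hcol
      rw [hw]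
    · -- false, true : (x1,(z1,y1)) = (x2,(y2,z2))
      obtain ⟨hx, hz, hy⟩ := heq
      subst hx; subst hz; subst hy
      exact absurd hcc1 (fun hcca => noswap hC hwz2 hyx2 hwy2 hwx2 hzy2 hzx2
        hwz1 hwy1 hwx1 hcc2 hcca)
    · -- true, false : (x1,(y1,z1)) = (x2,(z2,y2))
      obtain ⟨hx, hy, hz⟩ := heq
      subst hx; subst hy; subst hz
      exact absurd hcc2 (fun hccb => noswap hC hwz1 hyx1 hwy1 hwx1 hzy1 hzx1
        hwz2 hwy2 hwx2 hcc1 hccb)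
    · -- true, true
      obtain ⟨hx, hy, hz⟩ := heq
      subst hx; subst hy; subst hz
      have hw : w1 = w2 := by
        have hcol : C s(z1, w1) = C s(z1, w2) := by
          rw [show s(z1,w1) = s(w1,z1) from Sym2.eq_swap,
            show s(z1,w2) = s(w2,z1) from Sym2.eq_swap]
          exact hcc1.trans hcc2.symm
        exact partner_unique hC (Ne.symm hwz1) (Ne.symm hwz2) hcol
      rw [hw]

lemma key (hC : IsStarEdgeColoring (completeGraph (Fin n)) C) :
    3 * (n*(n-1)) * (n*(n-1)) ≤ k * ((n+4) * (n*(n-1))) := by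
  classical
  set A := ∑ d : Fin k, M C d with hA
  set S := ∑ d : Fin k, M C d * M C d with hS
  have hQsum : (QQ C).card = ∑ d : Fin k, ((QQ C).filter fun pq => cc C pq.1 = d).card :=
    card_eq_sum_card_fiberwise (fun pq _ => mem_univ _)
  have hRsum : (RR C).card = ∑ d : Fin k, ((RR C).filter fun xp => cc C xp.2 = d).card :=
    card_eq_sum_card_fiberwise (fun xp _ => mem_univ _)
  have hQ : (QQ C).card + 2 * A = S := by
    rw [hQsum, hA, hS, Finset.mul_sum, ← Finset.sum_add_distrib]
    exact Finset.sum_congr rfl fun d _ => card_Qd d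
  have hR : (RR C).card + S = n * A := by
    rw [hRsum, hS, hA, Finset.mul_sum, ← Finset.sum_add_distrib]
    exact Finset.sum_congr rfl fun d _ =>
      card_Rd (fun hab hac h => partner_unique hC hab hac h) d
  have hle := inj_bound hC
  have hCS : A * A ≤ k * S := by
    have h := sq_sum_le_card_mul_sum_sq (s := (univ : Finset (Fin k))) (f := M C)
    simpa [sq, Finset.card_univ] using h
  obtain ⟨B, hB⟩ : ∃ B, n * A = B := ⟨_, rfl⟩
  rw [hB] at hR
  have h3 : 3 * S ≤ B + 4 * A := by omega
  have hfin : 3 * A * A ≤ k * ((n+4) * A) := by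
    calc 3 * A * A = 3 * (A * A) := by ring
    _ ≤ 3 * (k * S) := Nat.mul_le_mul_left 3 hCS
    _ = k * (3 * S) := by ring
    _ ≤ k * (B + 4 * A) := Nat.mul_le_mul_left k h3
    _ = k * ((n+4) * A) := by rw [← hB]; ring
  have hAval : A = n * (n-1) := sum_M C
  rwa [hAval] at hfin

lemma main_bound (hC : IsStarEdgeColoring (completeGraph (Fin n)) C) (hn : 2 ≤ n) :
    3 * (n * (n-1)) ≤ k * (n + 4) := by
  have h := key hC
  have hApos : 0 < n * (n - 1) := by
    have : 1 ≤ n - 1 := by omega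
    exact Nat.mul_pos (by omega) this
  have h' : (3 * (n*(n-1))) * (n*(n-1)) ≤ (k * (n+4)) * (n*(n-1)) := by
    calc (3 * (n*(n-1))) * (n*(n-1)) = 3 * (n*(n-1)) * (n*(n-1)) := by ring
    _ ≤ k * ((n+4) * (n*(n-1))) := h
    _ = (k * (n+4)) * (n*(n-1)) := by ring
  exact Nat.le_of_mul_le_mul_right h' hApos

lemma exists_coloring (n : ℕ) :
    ∃ C : Sym2 (Fin n) → Fin (Fintype.card (Sym2 (Fin n))),
      IsStarEdgeColoring (completeGraph (Fin n)) C := by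
  classical
  refine ⟨⇑(Fintype.equivFin (Sym2 (Fin n))), ?_, ?_, ?_⟩
  · intro e1 _ e2 _ hne _
    exact fun h => hne ((Fintype.equivFin (Sym2 (Fin n))).injective h)
  all_goals {
    first
    | (intro u v w hl hp
       rintro ⟨a, b, hab⟩
       have hnd : w.edges.Nodup := hp.isTrail.edges_nodup
       have hlen : w.edges.length = 4 := by rw [SimpleGraph.Walk.length_edges, hl])
    | (intro u w hl hp
       rintro ⟨a, b, hab⟩
       have hnd : w.edges.Nodup := hp.isTrail.edges_nodup
       have hlen : w.edges.length = 4 := by rw [SimpleGraph.Walk.length_edges, hl])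
    have h1 : w.edges.toFinset.card = 4 := by
      rw [List.toFinset_card_of_nodup hnd, hlen]
    have h2 : w.edges.toFinset.image (Fintype.equivFin (Sym2 (Fin n))) ⊆ {a, b} := by
      intro c hc
      simp only [Finset.mem_image, List.mem_toFinset] at hc
      obtain ⟨e, he, rfl⟩ := hc
      rcases hab e he with h | h <;> simp [h]
    have h3 : (w.edges.toFinset.image (Fintype.equivFin (Sym2 (Fin n)))).card = 4 := by
      rw [Finset.card_image_of_injective _ (Fintype.equivFin (Sym2 (Fin n))).injective, h1]
    have h4 := Finset.card_le_card h2
    have h5 : ({a, b} : Finset _).card ≤ 2 :=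
      (Finset.card_insert_le a {b}).trans (by simp)
    omega
  }

end StarLB

theorem stmt_4 (n : ℕ) (hn : 1 ≤ n) :
    (3 * n * (n - 1) / (n + 4) : ℚ) ≤ starChromaticIndex (completeGraph (Fin n)) := by
  classical
  have hne : {k | ∃ C : Sym2 (Fin n) → Fin k,
      IsStarEdgeColoring (completeGraph (Fin n)) C}.Nonempty :=
    ⟨Fintype.card (Sym2 (Fin n)), StarLB.exists_coloring n⟩
  have hmem := Nat.sInf_mem hne
  obtain ⟨C, hC⟩ := hmem
  have hkdef : starChromaticIndex (completeGraph (Fin n))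
      = sInf {k | ∃ C : Sym2 (Fin n) → Fin k,
        IsStarEdgeColoring (completeGraph (Fin n)) C} := rfl
  rcases lt_or_ge n 2 with h2 | h2
  · interval_cases n
    norm_num
  · have hb := StarLB.main_bound hC h2
    rw [hkdef]
    rw [div_le_iff₀ (by positivity)]
    have hb' : ((3 * (n * (n-1)) : ℕ) : ℚ) ≤ ((sInf {k | ∃ C : Sym2 (Fin n) → Fin k,
        IsStarEdgeColoring (completeGraph (Fin n)) C} * (n+4) : ℕ) : ℚ) := by
      exact_mod_cast hb
    push_cast [Nat.cast_sub hn] at hb'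
    linarith
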